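/- Let (M, M', μ) be a dual pair over unital rings A, B, and suppose the elementary ring S = M ⊗_A M' has a unit element e and M, M' are firm respectively as left and right S-modules. Then M is finitely generated projective as a right A-module and the map φ : M' → Hom_A(M, A), φ(m')(m) = μ(m' ⊗ m), is bijective. -/

import Mathlib

open MulOpposite

/-- Relations defining `S ⊗_S M` for a left action `act` of `S` on `M`. -/
def relSM (S M : Type) [AddCommGroup S] [AddCommGroup M]
    (mul : S → S → S) (act : S → M → M) :
    AddSubgroup (FreeAbelianGroup (S × M)) :=
  AddSubgroup.closure
    ({z | ∃ s s' m, z = FreeAbelianGroup.of (s + s', m) - FreeAbelianGroup.of (s, m)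
        - FreeAbelianGroup.of (s', m)} ∪
     {z | ∃ s m n, z = FreeAbelianGroup.of (s, m + n) - FreeAbelianGroup.of (s, m)
        - FreeAbelianGroup.of (s, n)} ∪
     {z | ∃ s s' m, z = FreeAbelianGroup.of (mul s s', m) - FreeAbelianGroup.of (s, act s' m)})

/-- Relations defining `N ⊗_S S` for a right action `act'` of `S` on `N`. -/
def relNS (S N : Type) [AddCommGroup S] [AddCommGroup N]
    (mul : S → S → S) (act' : N → S → N) :
    AddSubgroup (FreeAbelianGroup (N × S)) :=
  AddSubgroup.closure
    ({z | ∃ y y' s, z = FreeAbelianGroup.of (y + y', s) - FreeAbelianGroup.of (y, s)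
        - FreeAbelianGroup.of (y', s)} ∪
     {z | ∃ y s s', z = FreeAbelianGroup.of (y, s + s') - FreeAbelianGroup.of (y, s)
        - FreeAbelianGroup.of (y, s')} ∪
     {z | ∃ y s s', z = FreeAbelianGroup.of (act' y s, s') - FreeAbelianGroup.of (y, mul s s')})

private lemma auxListSumFin {α γ : Type*} [AddCommMonoid γ] (l : List α) (f : α → γ) :
    (l.map f).sum = ∑ i : Fin l.length, f (l.get i) := by
  conv_lhs => rw [← List.ofFn_get l]
  rw [List.map_ofFn, List.sum_ofFn]
  rfl

/-- If the elementary ring `S = M ⊗_A M'` of a dual pair `(M, M', μ)` has a unit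
element `e`, and `M`, `M'` are firm as left resp. right `S`-modules, then `M` is
finitely generated projective as a right `A`-module and
`φ : M' → Hom_A(M, A)`, `φ(m')(m) = μ(m' ⊗ m)`, is bijective. -/
theorem stmt9 (A B M M' S : Type) [Ring A] [Ring B]
    [AddCommGroup M] [Module B M] [Module Aᵐᵒᵖ M] [SMulCommClass B Aᵐᵒᵖ M]
    [AddCommGroup M'] [Module A M'] [Module Bᵐᵒᵖ M'] [SMulCommClass A Bᵐᵒᵖ M']
    [AddCommGroup S]
    (μ : M' → M → A)
    (μ_addl : ∀ x y m, μ (x + y) m = μ x m + μ y m)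
    (μ_addr : ∀ x m n, μ x (m + n) = μ x m + μ x n)
    (μ_bal : ∀ x (b : B) m, μ (op b • x) m = μ x (b • m))
    (μ_linl : ∀ (a : A) x m, μ (a • x) m = a * μ x m)
    (μ_linr : ∀ x m (a : A), μ x (op a • m) = μ x m * a)
    (t : M → M' → S)
    (t_addl : ∀ m n x, t (m + n) x = t m x + t n x)
    (t_addr : ∀ m x y, t m (x + y) = t m x + t m y)
    (t_bal : ∀ m (a : A) x, t (op a • m) x = t m (a • x))
    (t_univ : ∀ (X : Type) [AddCommGroup X] (g : M → M' → X),
        (∀ m n x, g (m + n) x = g m x + g n x) →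
        (∀ m x y, g m (x + y) = g m x + g m y) →
        (∀ m (a : A) x, g (op a • m) x = g m (a • x)) →
        ∃! φ : S →+ X, ∀ m x, φ (t m x) = g m x)
    (mul : S → S → S)
    (mul_addl : ∀ s s' s'' : S, mul (s + s') s'' = mul s s'' + mul s' s'')
    (mul_addr : ∀ s s' s'' : S, mul s (s' + s'') = mul s s' + mul s s'')
    (mul_def : ∀ m x n y, mul (t m x) (t n y) = t (op (μ x n) • m) y)
    -- the left action of S on M and the right action of S on M'
    (act : S → M → M)
    (act_addl : ∀ s s' m, act (s + s') m = act s m + act s' m)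
    (act_addr : ∀ s m n, act s (m + n) = act s m + act s n)
    (act_def : ∀ m x n, act (t m x) n = op (μ x n) • m)
    (act_mul : ∀ s s' m, act (mul s s') m = act s (act s' m))
    (act' : M' → S → M')
    (act'_addl : ∀ y y' s, act' (y + y') s = act' y s + act' y' s)
    (act'_addr : ∀ y s s', act' y (s + s') = act' y s + act' y s')
    (act'_def : ∀ y m x, act' y (t m x) = μ y m • x)
    (act'_mul : ∀ y s s', act' y (mul s s') = act' (act' y s) s')
    -- S has a unit element e
    (e : S) (he : ∀ s : S, mul e s = s ∧ mul s e = s)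
    -- M is a firm left S-module
    (hfirmM : ∃ φ : (FreeAbelianGroup (S × M) ⧸ relSM S M mul act) →+ M,
        (∀ s m, φ (QuotientAddGroup.mk (FreeAbelianGroup.of (s, m))) = act s m) ∧
        Function.Bijective φ)
    -- M' is a firm right S-module
    (hfirmM' : ∃ φ : (FreeAbelianGroup (M' × S) ⧸ relNS S M' mul act') →+ M',
        (∀ y s, φ (QuotientAddGroup.mk (FreeAbelianGroup.of (y, s))) = act' y s) ∧
        Function.Bijective φ) :
    -- M is finitely generated projective as a right A-module,
    Module.Finite Aᵐᵒᵖ M ∧ Module.Projective Aᵐᵒᵖ M ∧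
    -- and φ : M' → Hom_A(M, A) is bijective
    Function.Injective (fun (x : M') (m : M) => μ x m) ∧
    (∀ f : M →ₗ[Aᵐᵒᵖ] A, ∃ x : M', ∀ m : M, f m = μ x m) := by
  classical
  -- basic additive lemmas
  have t0l : ∀ x : M', t 0 x = 0 := by
    intro x
    have h := t_addl 0 0 x
    rw [add_zero] at h
    exact (add_eq_left.mp h.symm)
  have tneg : ∀ (m : M) (x : M'), t (-m) x = - t m x := by
    intro m x
    have h := t_addl m (-m) x
    rw [add_neg_cancel, t0l] at h
    exact eq_neg_of_add_eq_zero_right h.symm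
  have mu0l : ∀ m : M, μ 0 m = 0 := by
    intro m
    have h := μ_addl 0 0 m
    rw [add_zero] at h
    exact (add_eq_left.mp h.symm)
  have act0l : ∀ n : M, act 0 n = 0 := by
    intro n
    have h := act_addl 0 0 n
    rw [add_zero] at h
    exact (add_eq_left.mp h.symm)
  have act0r : ∀ s : S, act s 0 = 0 := by
    intro s
    have h := act_addr s 0 0
    rw [add_zero] at h
    exact (add_eq_left.mp h.symm)
  have actnegr : ∀ (s : S) (n : M), act s (-n) = - act s n := by
    intro s n
    have h := act_addr s n (-n)
    rw [add_neg_cancel, act0r] at h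
    exact eq_neg_of_add_eq_zero_right h.symm
  have act'0r : ∀ y : M', act' y 0 = 0 := by
    intro y
    have h := act'_addr y 0 0
    rw [add_zero] at h
    exact (add_eq_left.mp h.symm)
  have act'0l : ∀ s : S, act' 0 s = 0 := by
    intro s
    have h := act'_addl 0 0 s
    rw [add_zero] at h
    exact (add_eq_left.mp h.symm)
  have act'negl : ∀ (y : M') (s : S), act' (-y) s = - act' y s := by
    intro y s
    have h := act'_addl y (-y) s
    rw [add_neg_cancel, act'0l] at h
    exact eq_neg_of_add_eq_zero_right h.symm
  -- every element of S is a finite sum of elementary tensors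
  have htop : ∀ s : S, ∃ L : List (M × M'), s = (L.map fun p => t p.1 p.2).sum := by
    set H : AddSubgroup S :=
      { carrier := {s | ∃ L : List (M × M'), s = (L.map fun p => t p.1 p.2).sum}
        zero_mem' := ⟨[], rfl⟩
        add_mem' := by
          rintro a b ⟨La, rfl⟩ ⟨Lb, rfl⟩
          exact ⟨La ++ Lb, by simp⟩
        neg_mem' := by
          rintro a ⟨L, rfl⟩
          refine ⟨L.map fun p => (-p.1, p.2), ?_⟩
          induction L with
          | nil => simp
          | cons p L ih => simp only [List.map_cons, List.sum_cons, neg_add, ih, tneg]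
      } with hH
    intro s
    obtain ⟨ψ, hψ, hu⟩ := t_univ (S ⧸ H) (fun _ _ => (0 : S ⧸ H))
      (by intros; simp) (by intros; simp) (by intros; simp)
    have h1 : (QuotientAddGroup.mk' H) = ψ := by
      refine hu _ (fun m x => ?_)
      rw [QuotientAddGroup.mk'_apply, QuotientAddGroup.eq_zero_iff]
      exact ⟨[(m, x)], by simp⟩
    have h2 : (0 : S →+ S ⧸ H) = ψ := hu _ (fun m x => rfl)
    have hz : ((s : S ⧸ H)) = 0 := by
      have := congrArg (fun φ : S →+ S ⧸ H => φ s) (h1.trans h2.symm)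
      simpa using this
    exact (QuotientAddGroup.eq_zero_iff s).mp hz
  -- the unit acts as identity on M
  obtain ⟨φM, hφM, hbijM⟩ := hfirmM
  have hactE : ∀ n : M, act e n = n := by
    intro n
    obtain ⟨q, rfl⟩ := hbijM.2 n
    induction q using QuotientAddGroup.induction_on with
    | H z =>
      induction z using FreeAbelianGroup.induction_on with
      | zero =>
        rw [show ((0 : FreeAbelianGroup (S × M)) : FreeAbelianGroup (S × M) ⧸ relSM S M mul act)
            = 0 from rfl, map_zero]
        exact act0r e
      | of p =>
        rw [hφM p.1 p.2, ← act_mul, (he p.1).1]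
      | neg p ih =>
        rw [show ((-FreeAbelianGroup.of p : FreeAbelianGroup (S × M)) :
            FreeAbelianGroup (S × M) ⧸ relSM S M mul act)
            = -((FreeAbelianGroup.of p : FreeAbelianGroup (S × M)) :
            FreeAbelianGroup (S × M) ⧸ relSM S M mul act) from rfl, map_neg, actnegr, ih]
      | add z w ihz ihw =>
        rw [show (((z + w : FreeAbelianGroup (S × M))) :
            FreeAbelianGroup (S × M) ⧸ relSM S M mul act)
            = ((z : FreeAbelianGroup (S × M) ⧸ relSM S M mul act) + w) from rfl, map_add,
          act_addr, ihz, ihw]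
  -- the unit acts as identity on M'
  obtain ⟨φN, hφN, hbijN⟩ := hfirmM'
  have hact'E : ∀ y : M', act' y e = y := by
    intro y
    obtain ⟨q, rfl⟩ := hbijN.2 y
    induction q using QuotientAddGroup.induction_on with
    | H z =>
      induction z using FreeAbelianGroup.induction_on with
      | zero =>
        rw [show ((0 : FreeAbelianGroup (M' × S)) : FreeAbelianGroup (M' × S) ⧸ relNS S M' mul act')
            = 0 from rfl, map_zero]
        exact act'0l e
      | of p =>
        rw [hφN p.1 p.2, ← act'_mul, (he p.2).2]
      | neg p ih =>
        rw [show ((-FreeAbelianGroup.of p : FreeAbelianGroup (M' × S)) :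
            FreeAbelianGroup (M' × S) ⧸ relNS S M' mul act')
            = -((FreeAbelianGroup.of p : FreeAbelianGroup (M' × S)) :
            FreeAbelianGroup (M' × S) ⧸ relNS S M' mul act') from rfl, map_neg, act'negl, ih]
      | add z w ihz ihw =>
        rw [show (((z + w : FreeAbelianGroup (M' × S))) :
            FreeAbelianGroup (M' × S) ⧸ relNS S M' mul act')
            = ((z : FreeAbelianGroup (M' × S) ⧸ relNS S M' mul act') + w) from rfl, map_add,
          act'_addl, ihz, ihw]
  -- write e as a finite sum of elementary tensors
  obtain ⟨l, hl⟩ := htop e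
  -- key identities
  have act_sum : ∀ (L : List (M × M')) (nn : M),
      act ((L.map fun p => t p.1 p.2).sum) nn = (L.map fun p => op (μ p.2 nn) • p.1).sum := by
    intro L nn
    induction L with
    | nil => simpa using act0l nn
    | cons p L ih =>
        simp only [List.map_cons, List.sum_cons, act_addl, act_def, ih]
  have act'_sum : ∀ (L : List (M × M')) (y : M'),
      act' y ((L.map fun p => t p.1 p.2).sum) = (L.map fun p => μ y p.1 • p.2).sum := by
    intro L y
    induction L with
    | nil => simpa using act'0r y
    | cons p L ih =>
        simp only [List.map_cons, List.sum_cons, act'_addr, act'_def, ih]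
  have key : ∀ nn : M, (l.map fun p => op (μ p.2 nn) • p.1).sum = nn := by
    intro nn
    rw [← act_sum l nn, ← hl, hactE]
  have key' : ∀ y : M', (l.map fun p => μ y p.1 • p.2).sum = y := by
    intro y
    rw [← act'_sum l y, ← hl, hact'E]
  -- set up the dual-basis linear maps
  set n := l.length with hn
  have keyFin : ∀ m : M, (∑ i : Fin n, op (μ (l.get i).2 m) • (l.get i).1) = m := by
    intro m
    rw [← auxListSumFin l (fun p => op (μ p.2 m) • p.1)]
    exact key m
  have hGsmul : ∀ (a : Aᵐᵒᵖ) (m : M) (x : M'), op (μ x (a • m)) = a * op (μ x m) := by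
    intro a m x
    have ha : a • m = op (unop a) • m := by rw [op_unop]
    rw [ha, μ_linr]
    rfl
  let G : M →ₗ[Aᵐᵒᵖ] (Fin n → Aᵐᵒᵖ) :=
    { toFun := fun m i => op (μ (l.get i).2 m)
      map_add' := by
        intro m m'
        funext i
        simp [μ_addr]
      map_smul' := by
        intro a m
        funext i
        simpa using hGsmul a m (l.get i).2 }
  let F : (Fin n → Aᵐᵒᵖ) →ₗ[Aᵐᵒᵖ] M :=
    { toFun := fun c => ∑ i : Fin n, c i • (l.get i).1
      map_add' := by
        intro c c'
        rw [← Finset.sum_add_distrib]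
        refine Finset.sum_congr rfl fun i _ => ?_
        simp [add_smul]
      map_smul' := by
        intro a c
        show (∑ i : Fin n, (a • c) i • (l.get i).1) = a • ∑ i : Fin n, c i • (l.get i).1
        rw [Finset.smul_sum]
        refine Finset.sum_congr rfl fun i _ => ?_
        simp [mul_smul] }
  have hFG : ∀ m : M, F (G m) = m := by
    intro m
    simpa [F, G] using keyFin m
  have hfin : Module.Finite Aᵐᵒᵖ M :=
    Module.Finite.of_surjective F (fun m => ⟨G m, hFG m⟩)
  have hproj : Module.Projective Aᵐᵒᵖ M :=
    Module.Projective.of_split G F (by ext m; exact hFG m)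
  refine ⟨hfin, hproj, ?_, ?_⟩
  · -- injectivity
    intro x x' h
    have hx : ∀ m, μ x m = μ x' m := fun m => congrFun h m
    calc x = (l.map fun p => μ x p.1 • p.2).sum := (key' x).symm
      _ = (l.map fun p => μ x' p.1 • p.2).sum := by simp only [hx]
      _ = x' := key' x'
  · -- surjectivity
    intro f
    refine ⟨(l.map fun p => f p.1 • p.2).sum, fun m => ?_⟩
    have mu_sum : ∀ L : List M', μ L.sum m = (L.map fun y => μ y m).sum := by
      intro L
      induction L with
      | nil => simpa using mu0l m
      | cons y L ih => simp only [List.sum_cons, List.map_cons, μ_addl, ih]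
    have h2 : μ ((l.map fun p => f p.1 • p.2).sum) m = (l.map fun p => f p.1 * μ p.2 m).sum := by
      rw [mu_sum, List.map_map]
      congr 1
      refine List.map_congr_left fun p _ => ?_
      simp [μ_linl]
    have h1 : f m = (l.map fun p => f p.1 * μ p.2 m).sum := by
      conv_lhs => rw [← key m]
      rw [map_list_sum, List.map_map]
      congr 1
      refine List.map_congr_left fun p _ => ?_
      show f (op (μ p.2 m) • p.1) = f p.1 * μ p.2 m
      rw [map_smul, op_smul_eq_mul]
    rw [h1, h2]
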